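/- Consider a short-range quantum (SRQ) strategy in a routed Bell experiment: a density matrix ρ on ℂ^{d_A} ⊗ ℂ^{d_B}; binary observables A₀, A₁ on ℂ^{d_A} and B₀, B₁ on ℂ^{d_B} (Hermitian with square the identity); a finite set Λ; positive semidefinite d_A×d_A matrices {N_λ}_{λ∈Λ} with Σ_λ N_λ = I; and real numbers a(x,λ) ∈ [−1,1] for x ∈ {0,1}, λ ∈ Λ. Define the short-path CHSH value S₀ = Tr[ρ(A₀⊗(B₀+B₁) + A₁⊗(B₀−B₁))] and the long-path quantity J₁ = Σ_{λ∈Λ} ( a(1,λ)·Tr[ρ(N_λ⊗B₀)] + a(0,λ)·Tr[ρ(N_λ⊗B₁)] ). If 2 ≤ S₀ ≤ 2√2, then J₁ ≤ (S₀ + √(8 − S₀²))/2. -/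

import Mathlib

open Matrix
open scoped Kronecker ComplexOrder

set_option linter.unusedSectionVars false

namespace Matrix.PosSemidef

open scoped MatrixOrder

noncomputable def sqrt {n : Type*} [Fintype n] [DecidableEq n] {A : Matrix n n ℂ}
    (_ : A.PosSemidef) : Matrix n n ℂ := CFC.sqrt A

lemma sqrt_mul_self {n : Type*} [Fintype n] [DecidableEq n] {A : Matrix n n ℂ}
    (hA : A.PosSemidef) : hA.sqrt * hA.sqrt = A := CFC.sqrt_mul_sqrt_self A hA.nonneg

lemma posSemidef_sqrt {n : Type*} [Fintype n] [DecidableEq n] {A : Matrix n n ℂ}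
    (hA : A.PosSemidef) : hA.sqrt.PosSemidef := (CFC.sqrt_nonneg A).posSemidef

end Matrix.PosSemidef

namespace RoutedBellAux

variable {m : Type*} [Fintype m] [DecidableEq m]

lemma frob_trace_eq (Z W : Matrix m m ℂ) :
    (Zᴴ * W).trace = ∑ p : m × m, (starRingEnd ℂ) (Z p.1 p.2) * W p.1 p.2 := by
  rw [Matrix.trace, Fintype.sum_prod_type]
  simp only [Matrix.diag_apply, Matrix.mul_apply, Matrix.conjTranspose_apply]
  rw [Finset.sum_comm]
  simp [RCLike.star_def]

lemma frob_re_nonneg (Z : Matrix m m ℂ) : 0 ≤ ((Zᴴ * Z).trace).re := by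
  rw [frob_trace_eq, Complex.re_sum]
  apply Finset.sum_nonneg
  intro p _
  simp only [Complex.mul_re, Complex.conj_re, Complex.conj_im]
  nlinarith [sq_nonneg (Z p.1 p.2).re, sq_nonneg (Z p.1 p.2).im]

lemma frob_cs (Z W : Matrix m m ℂ) :
    ‖(Zᴴ * W).trace‖ ≤ Real.sqrt ((Zᴴ * Z).trace).re * Real.sqrt ((Wᴴ * W).trace).re := by
  classical
  let v : Matrix m m ℂ → EuclideanSpace ℂ (m × m) := fun X => WithLp.toLp 2 (fun p : m × m => X p.1 p.2)
  have hinner : ∀ X Y : Matrix m m ℂ, (inner ℂ (v X) (v Y) : ℂ) = (Xᴴ * Y).trace := by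
    intro X Y
    rw [frob_trace_eq, PiLp.inner_apply]
    simp [v, RCLike.inner_apply, mul_comm]
  have h1 := norm_inner_le_norm (𝕜 := ℂ) (v Z) (v W)
  rw [hinner] at h1
  have h2 : ‖v Z‖ = Real.sqrt ((Zᴴ * Z).trace).re := by
    rw [norm_eq_sqrt_re_inner (𝕜 := ℂ), hinner]
    simp [RCLike.re_to_complex]
  have h3 : ‖v W‖ = Real.sqrt ((Wᴴ * W).trace).re := by
    rw [norm_eq_sqrt_re_inner (𝕜 := ℂ), hinner]
    simp [RCLike.re_to_complex]
  rw [h2, h3] at h1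
  exact h1

lemma rho_form (ρ : Matrix m m ℂ) (hρ : ρ.PosSemidef) (X Y : Matrix m m ℂ) :
    (ρ * (Xᴴ * Y)).trace = ((X * hρ.sqrt)ᴴ * (Y * hρ.sqrt)).trace := by
  have hH : (hρ.sqrt)ᴴ = hρ.sqrt := hρ.posSemidef_sqrt.isHermitian
  have hsq : hρ.sqrt * hρ.sqrt = ρ := hρ.sqrt_mul_self
  rw [Matrix.conjTranspose_mul, hH]
  calc (ρ * (Xᴴ * Y)).trace = ((Xᴴ * Y) * (hρ.sqrt * hρ.sqrt)).trace := by
        rw [hsq, Matrix.trace_mul_comm]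
    _ = ((hρ.sqrt * Xᴴ) * (Y * hρ.sqrt)).trace := by
        rw [show (Xᴴ * Y) * (hρ.sqrt * hρ.sqrt) = ((Xᴴ * Y) * hρ.sqrt) * hρ.sqrt by
              noncomm_ring,
            Matrix.trace_mul_comm]
        noncomm_ring

lemma rho_nonneg (ρ : Matrix m m ℂ) (hρ : ρ.PosSemidef) (X : Matrix m m ℂ) :
    0 ≤ ((ρ * (Xᴴ * X)).trace).re := by
  rw [rho_form ρ hρ]; exact frob_re_nonneg _

lemma rho_cs (ρ : Matrix m m ℂ) (hρ : ρ.PosSemidef) (X Y : Matrix m m ℂ) :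
    ‖(ρ * (Xᴴ * Y)).trace‖ ≤
      Real.sqrt ((ρ * (Xᴴ * X)).trace).re * Real.sqrt ((ρ * (Yᴴ * Y)).trace).re := by
  rw [rho_form ρ hρ X Y, rho_form ρ hρ X X, rho_form ρ hρ Y Y]
  exact frob_cs _ _

variable {mA mB : Type*} [Fintype mA] [DecidableEq mA] [Fintype mB] [DecidableEq mB]

lemma kron_conjT (X : Matrix mA mA ℂ) (Y : Matrix mB mB ℂ) : (X ⊗ₖ Y)ᴴ = Xᴴ ⊗ₖ Yᴴ := by
  ext ⟨i, j⟩ ⟨k, l⟩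
  simp [Matrix.conjTranspose_apply, Matrix.kroneckerMap_apply, mul_comm]

lemma sum_kron {ι : Type*} [Fintype ι] (N : ι → Matrix mA mA ℂ) (X : Matrix mB mB ℂ) :
    ∑ l, (N l ⊗ₖ X) = (∑ l, N l) ⊗ₖ X := by
  ext ⟨i, j⟩ ⟨k, l⟩
  simp [Matrix.kroneckerMap_apply, Matrix.sum_apply, Finset.sum_mul]

lemma sub_kron (X Y : Matrix mA mA ℂ) (Z : Matrix mB mB ℂ) :
    (X - Y) ⊗ₖ Z = X ⊗ₖ Z - Y ⊗ₖ Z := by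
  ext ⟨i, j⟩ ⟨k, l⟩
  simp [Matrix.kroneckerMap_apply, Matrix.sub_apply, sub_mul]

lemma kron_sub (X : Matrix mA mA ℂ) (Y Z : Matrix mB mB ℂ) :
    X ⊗ₖ (Y - Z) = X ⊗ₖ Y - X ⊗ₖ Z := by
  ext ⟨i, j⟩ ⟨k, l⟩
  simp [Matrix.kroneckerMap_apply, Matrix.sub_apply, mul_sub]


lemma kron_neg (X : Matrix mA mA ℂ) (Y : Matrix mB mB ℂ) :
    X ⊗ₖ (-Y) = -(X ⊗ₖ Y) := by
  ext ⟨i, j⟩ ⟨k, l⟩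
  simp [Matrix.kroneckerMap_apply]

end RoutedBellAux

set_option maxHeartbeats 1000000 in
open RoutedBellAux in
/-- bound J₁ ≤ (S₀ + √(8 − S₀²))/2 for short-range quantum
strategies in a routed Bell experiment. -/
theorem routed_bell_srq_J1_bound (dA dB : ℕ) (Λ : Type*) [Fintype Λ]
    (ρ : Matrix (Fin dA × Fin dB) (Fin dA × Fin dB) ℂ)
    (hρ : ρ.PosSemidef) (hρtr : ρ.trace = 1)
    (A₀ A₁ : Matrix (Fin dA) (Fin dA) ℂ)
    (B₀ B₁ : Matrix (Fin dB) (Fin dB) ℂ)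
    (hA₀ : A₀.IsHermitian) (hA₁ : A₁.IsHermitian)
    (hA₀2 : A₀ * A₀ = 1) (hA₁2 : A₁ * A₁ = 1)
    (hB₀ : B₀.IsHermitian) (hB₁ : B₁.IsHermitian)
    (hB₀2 : B₀ * B₀ = 1) (hB₁2 : B₁ * B₁ = 1)
    (N : Λ → Matrix (Fin dA) (Fin dA) ℂ)
    (hN : ∀ l, (N l).PosSemidef) (hNsum : ∑ l, N l = 1)
    (a : Fin 2 → Λ → ℝ) (ha : ∀ x l, a x l ∈ Set.Icc (-1 : ℝ) 1) :
    let S₀ : ℝ := ((ρ * (A₀ ⊗ₖ (B₀ + B₁) + A₁ ⊗ₖ (B₀ - B₁))).trace).re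
    let J₁ : ℝ := ∑ l, (a 1 l * ((ρ * (N l ⊗ₖ B₀)).trace).re
        + a 0 l * ((ρ * (N l ⊗ₖ B₁)).trace).re)
    2 ≤ S₀ → S₀ ≤ 2 * Real.sqrt 2 → J₁ ≤ (S₀ + Real.sqrt (8 - S₀ ^ 2)) / 2 := by
  intro S₀ J₁ hS1 hS2
  classical
  -- abbreviations
  set C : Matrix (Fin dB) (Fin dB) ℂ := B₀ + B₁ with hCdef
  set D : Matrix (Fin dB) (Fin dB) ℂ := B₀ - B₁ with hDdef
  set K : Matrix (Fin dB) (Fin dB) ℂ := B₀ * B₁ + B₁ * B₀ with hKdef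
  set L : Matrix (Fin dB) (Fin dB) ℂ := B₀ * B₁ - B₁ * B₀ with hLdef
  set Q : Matrix (Fin dA) (Fin dA) ℂ := A₀ * A₁ - A₁ * A₀ with hQdef
  set P : Matrix (Fin dA) (Fin dA) ℂ := A₀ * A₁ + A₁ * A₀ with hPdef
  set Sop : Matrix (Fin dA × Fin dB) (Fin dA × Fin dB) ℂ := A₀ ⊗ₖ C + A₁ ⊗ₖ D with hSodef
  have hS0 : S₀ = ((ρ * Sop).trace).re := rfl
  -- Hermiticity facts
  have hKH : Kᴴ = K := by
    rw [hKdef, Matrix.conjTranspose_add, Matrix.conjTranspose_mul,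
      Matrix.conjTranspose_mul, hB₀.eq, hB₁.eq, add_comm]
  have hLH : Lᴴ = -L := by
    rw [hLdef, Matrix.conjTranspose_sub, Matrix.conjTranspose_mul,
      Matrix.conjTranspose_mul, hB₀.eq, hB₁.eq, neg_sub]
  have hQH : Qᴴ = -Q := by
    rw [hQdef, Matrix.conjTranspose_sub, Matrix.conjTranspose_mul,
      Matrix.conjTranspose_mul, hA₀.eq, hA₁.eq, neg_sub]
  have hPH : Pᴴ = P := by
    rw [hPdef, Matrix.conjTranspose_add, Matrix.conjTranspose_mul,
      Matrix.conjTranspose_mul, hA₀.eq, hA₁.eq, add_comm]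
  have hCH : Cᴴ = C := by rw [hCdef, Matrix.conjTranspose_add, hB₀.eq, hB₁.eq]
  have hDH : Dᴴ = D := by rw [hDdef, Matrix.conjTranspose_sub, hB₀.eq, hB₁.eq]
  have hSoH : Sopᴴ = Sop := by
    rw [hSodef, Matrix.conjTranspose_add, kron_conjT, kron_conjT, hA₀.eq, hA₁.eq, hCH, hDH]
  -- algebraic identities
  have hxy : (B₀ * B₁) * (B₁ * B₀) = 1 := by
    rw [show (B₀ * B₁) * (B₁ * B₀) = B₀ * (B₁ * B₁) * B₀ by noncomm_ring, hB₁2,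
      mul_one, hB₀2]
  have hyx : (B₁ * B₀) * (B₀ * B₁) = 1 := by
    rw [show (B₁ * B₀) * (B₀ * B₁) = B₁ * (B₀ * B₀) * B₁ by noncomm_ring, hB₀2,
      mul_one, hB₁2]
  have hxyA : (A₀ * A₁) * (A₁ * A₀) = 1 := by
    rw [show (A₀ * A₁) * (A₁ * A₀) = A₀ * (A₁ * A₁) * A₀ by noncomm_ring, hA₁2,
      mul_one, hA₀2]
  have hyxA : (A₁ * A₀) * (A₀ * A₁) = 1 := by
    rw [show (A₁ * A₀) * (A₀ * A₁) = A₁ * (A₀ * A₀) * A₁ by noncomm_ring, hA₀2,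
      mul_one, hA₁2]
  have hKK : K * K = (4 : ℂ) • (1 : Matrix (Fin dB) (Fin dB) ℂ) + L * L := by
    have e : K * K - L * L = (B₀ * B₁) * (B₁ * B₀) + (B₀ * B₁) * (B₁ * B₀)
        + ((B₁ * B₀) * (B₀ * B₁) + (B₁ * B₀) * (B₀ * B₁)) := by
      rw [hKdef, hLdef]; noncomm_ring
    rw [hxy, hyx] at e
    have e2 : K * K - L * L = (4 : ℂ) • (1 : Matrix (Fin dB) (Fin dB) ℂ) := by rw [e]; module
    exact sub_eq_iff_eq_add.mp e2
  have hPQ : P * P - Q * Q = (4 : ℂ) • (1 : Matrix (Fin dA) (Fin dA) ℂ) := by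
    have e : P * P - Q * Q = (A₀ * A₁) * (A₁ * A₀) + (A₀ * A₁) * (A₁ * A₀)
        + ((A₁ * A₀) * (A₀ * A₁) + (A₁ * A₀) * (A₀ * A₁)) := by
      rw [hPdef, hQdef]; noncomm_ring
    rw [hxyA, hyxA] at e
    rw [e]; module
  have hQQ : Q * Qᴴ = (4 : ℂ) • (1 : Matrix (Fin dA) (Fin dA) ℂ) - P * P := by
    rw [hQH, mul_neg, ← hPQ]; abel
  have hLL : Lᴴ * L = (4 : ℂ) • (1 : Matrix (Fin dB) (Fin dB) ℂ) - K * K := by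
    rw [hLH, neg_mul, hKK]; abel
  have hCC : C * C + D * D = (4 : ℂ) • (1 : Matrix (Fin dB) (Fin dB) ℂ) := by
    have e : C * C + D * D = B₀ * B₀ + B₀ * B₀ + (B₁ * B₁ + B₁ * B₁) := by
      rw [hCdef, hDdef]; noncomm_ring
    rw [hB₀2, hB₁2] at e
    rw [e]; module
  have hCD : C * D = -L := by
    have e : C * D = B₀ * B₀ - B₁ * B₁ - (B₀ * B₁ - B₁ * B₀) := by
      rw [hCdef, hDdef]; noncomm_ring
    rw [hB₀2, hB₁2, sub_self] at e
    rw [e, hLdef]; abel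
  have hDC : D * C = L := by
    have e : D * C = B₀ * B₀ - B₁ * B₁ + (B₀ * B₁ - B₁ * B₀) := by
      rw [hCdef, hDdef]; noncomm_ring
    rw [hB₀2, hB₁2, sub_self] at e
    rw [e, hLdef]; abel
  have hSop2 : Sop * Sop = (4 : ℂ) • 1 - Q ⊗ₖ L := by
    have expand : Sop * Sop =
        (A₀ * A₀) ⊗ₖ (C * C) + (A₀ * A₁) ⊗ₖ (C * D)
          + ((A₁ * A₀) ⊗ₖ (D * C) + (A₁ * A₁) ⊗ₖ (D * D)) := by
      rw [hSodef, Matrix.mul_kronecker_mul, Matrix.mul_kronecker_mul,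
        Matrix.mul_kronecker_mul, Matrix.mul_kronecker_mul]
      noncomm_ring
    have e1 : (1 : Matrix (Fin dA) (Fin dA) ℂ) ⊗ₖ (C * C)
        + (1 : Matrix (Fin dA) (Fin dA) ℂ) ⊗ₖ (D * D)
        = (4 : ℂ) • (1 : Matrix (Fin dA × Fin dB) (Fin dA × Fin dB) ℂ) := by
      rw [← Matrix.kronecker_add, hCC, Matrix.kronecker_smul, Matrix.one_kronecker_one]
    have e2 : (A₀ * A₁) ⊗ₖ L - (A₁ * A₀) ⊗ₖ L = Q ⊗ₖ L := by
      rw [hQdef, sub_kron]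
    rw [expand, hA₀2, hA₁2, hCD, hDC, kron_neg]
    rw [← e1, ← e2]
    abel
  -- trace helpers
  have tr_sub : ∀ Z W : Matrix (Fin dA × Fin dB) (Fin dA × Fin dB) ℂ,
      ((ρ * (Z - W)).trace).re = ((ρ * Z).trace).re - ((ρ * W).trace).re := by
    intro Z W
    rw [mul_sub, Matrix.trace_sub, Complex.sub_re]
  have tr_four : ((ρ * ((4 : ℂ) • (1 : Matrix (Fin dA × Fin dB) (Fin dA × Fin dB) ℂ))).trace).re
      = 4 := by
    rw [Matrix.mul_smul, mul_one, Matrix.trace_smul, hρtr]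
    simp
  -- POVM square roots and factorizations
  have hM : ∀ l, (hN l).sqrt * (hN l).sqrt = N l := fun l => (hN l).sqrt_mul_self
  have hMH : ∀ l, ((hN l).sqrt)ᴴ = (hN l).sqrt := fun l => ((hN l).posSemidef_sqrt).isHermitian
  have hfact : ∀ (l : Λ) (X : Matrix (Fin dB) (Fin dB) ℂ),
      ((hN l).sqrt ⊗ₖ X)ᴴ * ((hN l).sqrt ⊗ₖ X) = N l ⊗ₖ (Xᴴ * X) := by
    intro l X
    rw [kron_conjT, hMH l, ← Matrix.mul_kronecker_mul, hM l]
  have hcross : ∀ (l : Λ) (X : Matrix (Fin dB) (Fin dB) ℂ),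
      ((hN l).sqrt ⊗ₖ (1 : Matrix (Fin dB) (Fin dB) ℂ))ᴴ * ((hN l).sqrt ⊗ₖ X)
        = N l ⊗ₖ X := by
    intro l X
    rw [kron_conjT, Matrix.conjTranspose_one, hMH l, ← Matrix.mul_kronecker_mul, hM l, one_mul]
  -- scalar quantities
  set p : Λ → ℝ := fun l => ((ρ * (N l ⊗ₖ (1 : Matrix (Fin dB) (Fin dB) ℂ))).trace).re
    with hpdef
  set k : Λ → ℝ := fun l => ((ρ * (N l ⊗ₖ K)).trace).re with hkdef
  set w : Λ → ℝ := fun l => ((ρ * (N l ⊗ₖ (K * K))).trace).re with hwdef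
  set β2 : ℝ :=
    ((ρ * ((1 : Matrix (Fin dA) (Fin dA) ℂ) ⊗ₖ (Lᴴ * L))).trace).re with hβdef
  have hp0 : ∀ l, 0 ≤ p l := by
    intro l
    have h := rho_nonneg ρ hρ ((hN l).sqrt ⊗ₖ (1 : Matrix (Fin dB) (Fin dB) ℂ))
    rw [hcross l 1] at h
    exact h
  have hw0 : ∀ l, 0 ≤ w l := by
    intro l
    have h := rho_nonneg ρ hρ ((hN l).sqrt ⊗ₖ K)
    rw [hfact l K, hKH] at h
    exact h
  have cs_l : ∀ (l : Λ) (X : Matrix (Fin dB) (Fin dB) ℂ),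
      ‖(ρ * (N l ⊗ₖ X)).trace‖ ≤
        Real.sqrt (p l) * Real.sqrt ((ρ * (N l ⊗ₖ (Xᴴ * X))).trace).re := by
    intro l X
    have h := rho_cs ρ hρ ((hN l).sqrt ⊗ₖ (1 : Matrix (Fin dB) (Fin dB) ℂ))
      ((hN l).sqrt ⊗ₖ X)
    rw [hfact l X, hcross l X, hcross l 1] at h
    exact h
  -- sums
  have sum_tr : ∀ X : Matrix (Fin dB) (Fin dB) ℂ,
      ∑ l, ((ρ * (N l ⊗ₖ X)).trace).re
        = ((ρ * ((1 : Matrix (Fin dA) (Fin dA) ℂ) ⊗ₖ X)).trace).re := by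
    intro X
    rw [← Complex.re_sum, ← Matrix.trace_sum, ← Finset.mul_sum, sum_kron, hNsum]
  have hSump : ∑ l, p l = 1 := by
    rw [hpdef, sum_tr, Matrix.one_kronecker_one, mul_one, hρtr]
    simp
  have hjK : (1 : Matrix (Fin dA) (Fin dA) ℂ) ⊗ₖ (K * K)
      = (4 : ℂ) • (1 : Matrix (Fin dA × Fin dB) (Fin dA × Fin dB) ℂ)
        - (1 : Matrix (Fin dA) (Fin dA) ℂ) ⊗ₖ (Lᴴ * L) := by
    rw [hLL, kron_sub, Matrix.kronecker_smul, Matrix.one_kronecker_one]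
    abel
  have hSumw : ∑ l, w l = 4 - β2 := by
    rw [hwdef, sum_tr, hjK, tr_sub, tr_four, hβdef]
  have hβfact : ((1 : Matrix (Fin dA) (Fin dA) ℂ) ⊗ₖ L)ᴴ
      * ((1 : Matrix (Fin dA) (Fin dA) ℂ) ⊗ₖ L)
      = (1 : Matrix (Fin dA) (Fin dA) ℂ) ⊗ₖ (Lᴴ * L) := by
    rw [kron_conjT, Matrix.conjTranspose_one, ← Matrix.mul_kronecker_mul, one_mul]
  have hβ0 : 0 ≤ β2 := by
    have h := rho_nonneg ρ hρ ((1 : Matrix (Fin dA) (Fin dA) ℂ) ⊗ₖ L)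
    rw [hβfact] at h
    exact h
  have hβ4 : β2 ≤ 4 := by
    have h := rho_nonneg ρ hρ ((1 : Matrix (Fin dA) (Fin dA) ℂ) ⊗ₖ K)
    have hKfact : ((1 : Matrix (Fin dA) (Fin dA) ℂ) ⊗ₖ K)ᴴ
        * ((1 : Matrix (Fin dA) (Fin dA) ℂ) ⊗ₖ K)
        = (1 : Matrix (Fin dA) (Fin dA) ℂ) ⊗ₖ (K * K) := by
      rw [kron_conjT, Matrix.conjTranspose_one, hKH, ← Matrix.mul_kronecker_mul, one_mul]
    rw [hKfact, hjK, tr_sub, tr_four] at h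
    linarith
  have hk_abs : ∀ l, |k l| ≤ Real.sqrt (p l) * Real.sqrt (w l) := by
    intro l
    have h := cs_l l K
    rw [hKH] at h
    calc |k l| ≤ ‖(ρ * (N l ⊗ₖ K)).trace‖ := Complex.abs_re_le_norm _
      _ = ‖(ρ * (N l ⊗ₖ K)).trace‖ := rfl
      _ ≤ Real.sqrt (p l) * Real.sqrt (w l) := h
  have hSumk : ∑ l, |k l| ≤ Real.sqrt (4 - β2) := by
    calc ∑ l, |k l| ≤ ∑ l, Real.sqrt (p l) * Real.sqrt (w l) :=
          Finset.sum_le_sum fun l _ => hk_abs l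
      _ ≤ Real.sqrt (∑ l, p l) * Real.sqrt (∑ l, w l) :=
          Real.sum_sqrt_mul_sqrt_le _ hp0 hw0
      _ = Real.sqrt (4 - β2) := by rw [hSump, hSumw, Real.sqrt_one, one_mul]
  -- per-λ bound for J terms
  have hT : ∀ l, a 1 l * ((ρ * (N l ⊗ₖ B₀)).trace).re
      + a 0 l * ((ρ * (N l ⊗ₖ B₁)).trace).re
      ≤ Real.sqrt (p l) * Real.sqrt (2 * p l + |k l|) := by
    intro l
    set G : Matrix (Fin dB) (Fin dB) ℂ :=
      ((a 1 l : ℝ) : ℂ) • B₀ + ((a 0 l : ℝ) : ℂ) • B₁ with hGdef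
    have hGH : Gᴴ = G := by
      rw [hGdef]
      simp [Matrix.conjTranspose_smul, hB₀.eq, hB₁.eq, Complex.conj_ofReal]
    have e₁ : (ρ * (N l ⊗ₖ G)).trace
        = ((a 1 l : ℝ) : ℂ) * (ρ * (N l ⊗ₖ B₀)).trace
          + ((a 0 l : ℝ) : ℂ) * (ρ * (N l ⊗ₖ B₁)).trace := by
      rw [hGdef, Matrix.kronecker_add, Matrix.kronecker_smul, Matrix.kronecker_smul,
        mul_add, Matrix.mul_smul, Matrix.mul_smul, Matrix.trace_add, Matrix.trace_smul,
        Matrix.trace_smul, smul_eq_mul, smul_eq_mul]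
    have lhs_eq : a 1 l * ((ρ * (N l ⊗ₖ B₀)).trace).re
        + a 0 l * ((ρ * (N l ⊗ₖ B₁)).trace).re = ((ρ * (N l ⊗ₖ G)).trace).re := by
      rw [e₁, Complex.add_re, Complex.re_ofReal_mul, Complex.re_ofReal_mul]
    have hGG : G * G = (((a 1 l : ℝ) : ℂ) * ((a 1 l : ℝ) : ℂ)
          + ((a 0 l : ℝ) : ℂ) * ((a 0 l : ℝ) : ℂ)) • (1 : Matrix (Fin dB) (Fin dB) ℂ)
        + (((a 1 l : ℝ) : ℂ) * ((a 0 l : ℝ) : ℂ)) • K := by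
      rw [hGdef, hKdef]
      rw [add_mul, mul_add, mul_add, smul_mul_smul_comm, smul_mul_smul_comm,
        smul_mul_smul_comm, smul_mul_smul_comm, hB₀2, hB₁2]
      module
    have hGGtr : ((ρ * (N l ⊗ₖ (G * G))).trace).re
        = (a 1 l * a 1 l + a 0 l * a 0 l) * p l + (a 1 l * a 0 l) * k l := by
      rw [hGG, Matrix.kronecker_add, Matrix.kronecker_smul, Matrix.kronecker_smul,
        mul_add, Matrix.mul_smul, Matrix.mul_smul, Matrix.trace_add, Matrix.trace_smul,
        Matrix.trace_smul, Complex.add_re, smul_eq_mul, smul_eq_mul]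
      rw [show ((a 1 l : ℂ) * (a 1 l : ℂ) + (a 0 l : ℂ) * (a 0 l : ℂ))
            = ((a 1 l * a 1 l + a 0 l * a 0 l : ℝ) : ℂ) by push_cast; ring,
        show ((a 1 l : ℂ) * (a 0 l : ℂ)) = ((a 1 l * a 0 l : ℝ) : ℂ) by push_cast; ring,
        Complex.re_ofReal_mul, Complex.re_ofReal_mul]
    have ha1 := ha 1 l
    have ha0 := ha 0 l
    simp only [Set.mem_Icc] at ha1 ha0
    have hbound : ((ρ * (N l ⊗ₖ (G * G))).trace).re ≤ 2 * p l + |k l| := by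
      rw [hGGtr]
      have habs1 : |a 1 l| ≤ 1 := abs_le.mpr ⟨ha1.1, ha1.2⟩
      have habs0 : |a 0 l| ≤ 1 := abs_le.mpr ⟨ha0.1, ha0.2⟩
      have h2 : a 1 l * a 0 l * k l ≤ |k l| := by
        calc a 1 l * a 0 l * k l ≤ |a 1 l * a 0 l * k l| := le_abs_self _
          _ = |a 1 l| * |a 0 l| * |k l| := by rw [abs_mul, abs_mul]
          _ ≤ |k l| := by
              have hx : |a 1 l| * |a 0 l| ≤ 1 := mul_le_one₀ habs1 (abs_nonneg _) habs0
              exact mul_le_of_le_one_left (abs_nonneg (k l)) hx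
      have hsq : a 1 l * a 1 l + a 0 l * a 0 l ≤ 2 := by nlinarith
      have h3 : (a 1 l * a 1 l + a 0 l * a 0 l) * p l ≤ 2 * p l :=
        mul_le_mul_of_nonneg_right hsq (hp0 l)
      linarith
    calc a 1 l * ((ρ * (N l ⊗ₖ B₀)).trace).re + a 0 l * ((ρ * (N l ⊗ₖ B₁)).trace).re
        = ((ρ * (N l ⊗ₖ G)).trace).re := lhs_eq
      _ ≤ ‖(ρ * (N l ⊗ₖ G)).trace‖ := Complex.re_le_norm _
      _ = ‖(ρ * (N l ⊗ₖ G)).trace‖ := rfl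
      _ ≤ Real.sqrt (p l) * Real.sqrt ((ρ * (N l ⊗ₖ (Gᴴ * G))).trace).re := cs_l l G
      _ ≤ Real.sqrt (p l) * Real.sqrt (2 * p l + |k l|) := by
          rw [hGH]
          exact mul_le_mul_of_nonneg_left (Real.sqrt_le_sqrt hbound) (Real.sqrt_nonneg _)
  -- bound on J₁
  have hJbound : J₁ ≤ Real.sqrt (2 + Real.sqrt (4 - β2)) := by
    have h1 : J₁ ≤ ∑ l, Real.sqrt (p l) * Real.sqrt (2 * p l + |k l|) :=
      Finset.sum_le_sum fun l _ => hT l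
    have h2 : ∑ l, Real.sqrt (p l) * Real.sqrt (2 * p l + |k l|)
        ≤ Real.sqrt (∑ l, p l) * Real.sqrt (∑ l, (2 * p l + |k l|)) :=
      Real.sum_sqrt_mul_sqrt_le _ hp0 (fun l => add_nonneg (by linarith [hp0 l]) (abs_nonneg _))
    have h3 : ∑ l, (2 * p l + |k l|) = 2 + ∑ l, |k l| := by
      rw [Finset.sum_add_distrib, ← Finset.mul_sum, hSump, mul_one]
    have h4 : Real.sqrt (∑ l, p l) * Real.sqrt (∑ l, (2 * p l + |k l|))
        = Real.sqrt (2 + ∑ l, |k l|) := by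
      rw [hSump, h3, Real.sqrt_one, one_mul]
    have h5 : Real.sqrt (2 + ∑ l, |k l|) ≤ Real.sqrt (2 + Real.sqrt (4 - β2)) :=
      Real.sqrt_le_sqrt (by linarith)
    linarith
  -- bound on S₀
  have hSsq : S₀ ^ 2 ≤ 4 - ((ρ * (Q ⊗ₖ L)).trace).re := by
    have habs : ‖(ρ * Sop).trace‖ ≤ Real.sqrt (((ρ * (Sop * Sop)).trace).re) := by
      have h := rho_cs ρ hρ (1 : Matrix (Fin dA × Fin dB) (Fin dA × Fin dB) ℂ) Sop
      rw [Matrix.conjTranspose_one, one_mul, one_mul, Matrix.mul_one, hρtr, hSoH] at h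
      simpa using h
    have hnn : 0 ≤ ((ρ * (Sop * Sop)).trace).re := by
      have h := rho_nonneg ρ hρ Sop
      rw [hSoH] at h
      exact h
    have hS0n : 0 ≤ S₀ := by linarith
    have h1 : S₀ ≤ ‖(ρ * Sop).trace‖ := by
      rw [hS0]
      calc ((ρ * Sop).trace).re ≤ ‖(ρ * Sop).trace‖ := Complex.re_le_norm _
        _ = ‖(ρ * Sop).trace‖ := rfl
    have h2 : S₀ ^ 2 ≤ ((ρ * (Sop * Sop)).trace).re := by
      calc S₀ ^ 2 ≤ (Real.sqrt (((ρ * (Sop * Sop)).trace).re)) ^ 2 := by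
            apply pow_le_pow_left₀ hS0n (h1.trans habs)
        _ = ((ρ * (Sop * Sop)).trace).re := Real.sq_sqrt hnn
    have h3 : ((ρ * (Sop * Sop)).trace).re = 4 - ((ρ * (Q ⊗ₖ L)).trace).re := by
      rw [hSop2, tr_sub, tr_four]
    linarith
  have hQL : -((ρ * (Q ⊗ₖ L)).trace).re ≤ 2 * Real.sqrt β2 := by
    have hX : (Qᴴ ⊗ₖ (1 : Matrix (Fin dB) (Fin dB) ℂ))ᴴ = Q ⊗ₖ 1 := by
      rw [kron_conjT, Matrix.conjTranspose_conjTranspose, Matrix.conjTranspose_one]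
    have h := rho_cs ρ hρ (Qᴴ ⊗ₖ (1 : Matrix (Fin dB) (Fin dB) ℂ))
      ((1 : Matrix (Fin dA) (Fin dA) ℂ) ⊗ₖ L)
    rw [hX] at h
    have e1 : (Q ⊗ₖ (1 : Matrix (Fin dB) (Fin dB) ℂ))
        * ((1 : Matrix (Fin dA) (Fin dA) ℂ) ⊗ₖ L) = Q ⊗ₖ L := by
      rw [← Matrix.mul_kronecker_mul, mul_one, one_mul]
    have e2 : (Q ⊗ₖ (1 : Matrix (Fin dB) (Fin dB) ℂ))
        * (Qᴴ ⊗ₖ (1 : Matrix (Fin dB) (Fin dB) ℂ)) = (Q * Qᴴ) ⊗ₖ 1 := by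
      rw [← Matrix.mul_kronecker_mul, one_mul]
    rw [e1, e2, hβfact] at h
    have hQ4 : ((ρ * ((Q * Qᴴ) ⊗ₖ (1 : Matrix (Fin dB) (Fin dB) ℂ))).trace).re ≤ 4 := by
      have hjQ : (Q * Qᴴ) ⊗ₖ (1 : Matrix (Fin dB) (Fin dB) ℂ)
          = (4 : ℂ) • (1 : Matrix (Fin dA × Fin dB) (Fin dA × Fin dB) ℂ)
            - (P * P) ⊗ₖ (1 : Matrix (Fin dB) (Fin dB) ℂ) := by
        rw [hQQ, sub_kron, Matrix.smul_kronecker, Matrix.one_kronecker_one]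
      have hPnn : 0 ≤ ((ρ * ((P * P) ⊗ₖ (1 : Matrix (Fin dB) (Fin dB) ℂ))).trace).re := by
        have h' := rho_nonneg ρ hρ (P ⊗ₖ (1 : Matrix (Fin dB) (Fin dB) ℂ))
        have e3 : (P ⊗ₖ (1 : Matrix (Fin dB) (Fin dB) ℂ))ᴴ
            * (P ⊗ₖ (1 : Matrix (Fin dB) (Fin dB) ℂ))
            = (P * P) ⊗ₖ (1 : Matrix (Fin dB) (Fin dB) ℂ) := by
          rw [kron_conjT, Matrix.conjTranspose_one, hPH, ← Matrix.mul_kronecker_mul, one_mul]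
        rw [e3] at h'
        exact h'
      rw [hjQ, tr_sub, tr_four]
      linarith
    have hQnn : 0 ≤ ((ρ * ((Q * Qᴴ) ⊗ₖ (1 : Matrix (Fin dB) (Fin dB) ℂ))).trace).re := by
      have h' := rho_nonneg ρ hρ (Qᴴ ⊗ₖ (1 : Matrix (Fin dB) (Fin dB) ℂ))
      rw [hX, e2] at h'
      exact h'
    have hsq4 : Real.sqrt (((ρ * ((Q * Qᴴ) ⊗ₖ (1 : Matrix (Fin dB) (Fin dB) ℂ))).trace).re)
        ≤ 2 := by
      calc Real.sqrt (((ρ * ((Q * Qᴴ) ⊗ₖ (1 : Matrix (Fin dB) (Fin dB) ℂ))).trace).re)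
          ≤ Real.sqrt 4 := Real.sqrt_le_sqrt hQ4
        _ = 2 := by
            rw [show (4 : ℝ) = 2 ^ 2 by norm_num, Real.sqrt_sq (by norm_num : (0:ℝ) ≤ 2)]
    calc -((ρ * (Q ⊗ₖ L)).trace).re ≤ |((ρ * (Q ⊗ₖ L)).trace).re| := neg_le_abs _
      _ ≤ ‖(ρ * (Q ⊗ₖ L)).trace‖ := Complex.abs_re_le_norm _
      _ = ‖(ρ * (Q ⊗ₖ L)).trace‖ := rfl
      _ ≤ Real.sqrt (((ρ * ((Q * Qᴴ) ⊗ₖ (1 : Matrix (Fin dB) (Fin dB) ℂ))).trace).re)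
            * Real.sqrt β2 := h
      _ ≤ 2 * Real.sqrt β2 :=
          mul_le_mul_of_nonneg_right hsq4 (Real.sqrt_nonneg _)
  have hSfin : S₀ ^ 2 ≤ 4 + 2 * Real.sqrt β2 := by linarith
  -- final algebra
  have hS8 : S₀ ^ 2 ≤ 8 := by
    have h2 : Real.sqrt 2 ^ 2 = 2 := Real.sq_sqrt (by norm_num)
    nlinarith [Real.sqrt_nonneg 2]
  have h8nn : 0 ≤ 8 - S₀ ^ 2 := by linarith
  have hβlb : ((S₀ ^ 2 - 4) / 2) ^ 2 ≤ β2 := by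
    have h1 : (S₀ ^ 2 - 4) / 2 ≤ Real.sqrt β2 := by linarith
    have h2 : 0 ≤ (S₀ ^ 2 - 4) / 2 := by nlinarith
    calc ((S₀ ^ 2 - 4) / 2) ^ 2 ≤ Real.sqrt β2 ^ 2 := pow_le_pow_left₀ h2 h1 2
      _ = β2 := Real.sq_sqrt hβ0
  have hsqrt8 : Real.sqrt (8 - S₀ ^ 2) ^ 2 = 8 - S₀ ^ 2 := Real.sq_sqrt h8nn
  have hkey : Real.sqrt (4 - β2) ≤ S₀ * Real.sqrt (8 - S₀ ^ 2) / 2 := by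
    have h1 : 4 - β2 ≤ (S₀ * Real.sqrt (8 - S₀ ^ 2) / 2) ^ 2 := by
      have : (S₀ * Real.sqrt (8 - S₀ ^ 2) / 2) ^ 2 = S₀ ^ 2 * (8 - S₀ ^ 2) / 4 := by
        rw [div_pow, mul_pow, hsqrt8]; ring
      rw [this]
      nlinarith [hβlb]
    have h2 : 0 ≤ S₀ * Real.sqrt (8 - S₀ ^ 2) / 2 := by
      have := Real.sqrt_nonneg (8 - S₀ ^ 2)
      nlinarith
    calc Real.sqrt (4 - β2) ≤ Real.sqrt ((S₀ * Real.sqrt (8 - S₀ ^ 2) / 2) ^ 2) :=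
          Real.sqrt_le_sqrt h1
      _ = S₀ * Real.sqrt (8 - S₀ ^ 2) / 2 := Real.sqrt_sq h2
  have hRHSnn : 0 ≤ (S₀ + Real.sqrt (8 - S₀ ^ 2)) / 2 := by
    have := Real.sqrt_nonneg (8 - S₀ ^ 2)
    linarith
  have hRHSsq : ((S₀ + Real.sqrt (8 - S₀ ^ 2)) / 2) ^ 2
      = 2 + S₀ * Real.sqrt (8 - S₀ ^ 2) / 2 := by
    have : ((S₀ + Real.sqrt (8 - S₀ ^ 2)) / 2) ^ 2
        = (S₀ ^ 2 + Real.sqrt (8 - S₀ ^ 2) ^ 2 + 2 * (S₀ * Real.sqrt (8 - S₀ ^ 2))) / 4 := by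
      ring
    rw [this, hsqrt8]
    ring
  calc J₁ ≤ Real.sqrt (2 + Real.sqrt (4 - β2)) := hJbound
    _ ≤ Real.sqrt (2 + S₀ * Real.sqrt (8 - S₀ ^ 2) / 2) := Real.sqrt_le_sqrt (by linarith)
    _ = Real.sqrt (((S₀ + Real.sqrt (8 - S₀ ^ 2)) / 2) ^ 2) := by rw [hRHSsq]
    _ = (S₀ + Real.sqrt (8 - S₀ ^ 2)) / 2 := Real.sqrt_sq hRHSnn
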